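/- With F L-Lipschitz, η ∈ (0, 1/(2L)), z₁ = J_{ηA}(z₀ - ηF(z₀)), and ηc₁ = z₀ - ηF(z₀) - z₁, define V₁ = ‖ηF(z₁)+ηc₁‖² + ‖ηF(z₁)-ηF(z₀)‖² + ⟨ηF(z₁)+ηc₁, z₁-z₀⟩. Then V₁ ≤ 4‖z₁ - z₀‖². -/
import Mathlib


open scoped RealInnerProductSpace

theorem stmt_11 (n : ℕ) (L η : ℝ) (hL : 0 < L) (hη0 : 0 < η) (hη1 : η < 1 / (2 * L))
    (F : EuclideanSpace ℝ (Fin n) → EuclideanSpace ℝ (Fin n))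
    (hF : ∀ a b, ‖F a - F b‖ ≤ L * ‖a - b‖)
    (z₀ z₁ c₁ : EuclideanSpace ℝ (Fin n))
    (hc₁ : η • c₁ = z₀ - η • F z₀ - z₁) :
    ‖η • F z₁ + η • c₁‖ ^ 2 + ‖η • F z₁ - η • F z₀‖ ^ 2
      + ⟪η • F z₁ + η • c₁, z₁ - z₀⟫ ≤ 4 * ‖z₁ - z₀‖ ^ 2 := by
  set w : EuclideanSpace ℝ (Fin n) := η • F z₁ - η • F z₀ with hw
  set d : EuclideanSpace ℝ (Fin n) := z₁ - z₀ with hd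
  have key : η • F z₁ + η • c₁ = w - d := by
    rw [hc₁, hw, hd]; abel
  rw [key]
  have e1 : ‖w - d‖ ^ 2 = ‖w‖ ^ 2 - 2 * ⟪w, d⟫ + ‖d‖ ^ 2 := by
    rw [norm_sub_sq_real]; try ring
  have e2 : ⟪w - d, d⟫ = ⟪w, d⟫ - ‖d‖ ^ 2 := by
    rw [inner_sub_left, real_inner_self_eq_norm_sq]
  rw [e1, e2]
  have hwd : ‖w‖ ≤ (1/2) * ‖d‖ := by
    have h1 : ‖w‖ = η * ‖F z₁ - F z₀‖ := by
      rw [hw, ← smul_sub, norm_smul, Real.norm_eq_abs, abs_of_pos hη0]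
    have h2 : ‖F z₁ - F z₀‖ ≤ L * ‖d‖ := hF z₁ z₀
    have h3 : η * L ≤ 1/2 := by
      have : η < 1/(2*L) := hη1
      have := (lt_div_iff₀ (by positivity : (0:ℝ) < 2*L)).mp this
      nlinarith
    calc ‖w‖ = η * ‖F z₁ - F z₀‖ := h1
    _ ≤ η * (L * ‖d‖) := by
        exact mul_le_mul_of_nonneg_left h2 hη0.le
    _ = (η * L) * ‖d‖ := by ring
    _ ≤ (1/2) * ‖d‖ := by
        exact mul_le_mul_of_nonneg_right h3 (norm_nonneg _)
  have hip : -⟪w, d⟫ ≤ ‖w‖ * ‖d‖ := by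
    have := abs_real_inner_le_norm w d
    cases' abs_le.mp this with h _
    linarith
  have hwn : (0:ℝ) ≤ ‖w‖ := norm_nonneg _
  have hdn : (0:ℝ) ≤ ‖d‖ := norm_nonneg _
  nlinarith [sq_nonneg ‖d‖, sq_nonneg ‖w‖, mul_le_mul_of_nonneg_right hwd hdn, sq_nonneg (‖w‖ - ‖d‖)]
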